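/- arXiv:2101.10519 — 2 statements merged into one kernel-verified Lean document; each statement's English description precedes it below -/
import Mathlib

section
/- Bing Shrinking Criterion: let X and Y be nonempty compact metric spaces and f : X → Y a continuous surjection. Then f is approximable by homeomorphisms if and only if for every ε > 0 there exists a homeomorphism h : X → X such that (1) dist_Y(f(h(x)), f(x)) < ε for all x ∈ X, and (2) diam_X(h(f⁻¹(y))) < ε for all y ∈ Y. -/
/-- A continuous surjection `f : X → Y` between compact metric spaces is *approximable by
homeomorphisms* (ABH) if for every `ε > 0` there is a homeomorphism `g : X ≃ₜ Y` with
`dist (f x) (g x) < ε` for all `x`. -/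
def ApproximableByHomeomorphisms {X Y : Type} [MetricSpace X] [MetricSpace Y]
    (f : X → Y) : Prop :=
  ∀ ε > (0 : ℝ), ∃ g : X ≃ₜ Y, ∀ x : X, dist (f x) (g x) < ε

open Metric

namespace BingAux

variable {X Y : Type} [MetricSpace X] [MetricSpace Y] [CompactSpace X] [CompactSpace Y]

def U (X Y : Type) [MetricSpace X] [MetricSpace Y] [CompactSpace X] (c : ℝ) : Set C(X, Y) :=
  {g | ∃ η > (0:ℝ), ∀ x x' : X, dist (g x) (g x') < η → dist x x' < c}

omit [CompactSpace Y] in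
lemma isOpen_U (c : ℝ) : IsOpen (U X Y c) := by
  rw [Metric.isOpen_iff]
  rintro g ⟨η, hη, hg⟩
  refine ⟨η/3, by linarith, ?_⟩
  intro g' hg'
  refine ⟨η/3, by linarith, ?_⟩
  intro x x' hxx'
  apply hg
  have h1 : dist (g x) (g' x) ≤ dist g g' := ContinuousMap.dist_apply_le_dist x
  have h2 : dist (g' x') (g x') ≤ dist g' g := ContinuousMap.dist_apply_le_dist x'
  have h3 : dist (g x) (g x') ≤ dist (g x) (g' x) + dist (g' x) (g' x') + dist (g' x') (g x') :=
    dist_triangle4 _ _ _ _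
  have h4 : dist g g' = dist g' g := dist_comm _ _
  have h5 : dist g' g < η/3 := mem_ball.mp hg'
  linarith

omit [CompactSpace Y] in
lemma mem_U_of_fibers {g : C(X, Y)} {c : ℝ}
    (hfib : ∀ y : Y, diam (g ⁻¹' {y}) < c) : g ∈ U X Y c := by
  by_cases hK : ∃ p : X × X, c ≤ dist p.1 p.2
  · set K : Set (X × X) := {p | c ≤ dist p.1 p.2} with hKdef
    have hKclosed : IsClosed K :=
      isClosed_le continuous_const (continuous_dist.comp (continuous_fst.prodMk continuous_snd))
    have hKcompact : IsCompact K := hKclosed.isCompact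
    have hcont : ContinuousOn (fun p : X × X => dist (g p.1) (g p.2)) K :=
      (continuous_dist.comp ((g.continuous.comp continuous_fst).prodMk
        (g.continuous.comp continuous_snd))).continuousOn
    obtain ⟨p₀, hp₀K, hp₀min⟩ := hKcompact.exists_isMinOn hK hcont
    have hηpos : 0 < dist (g p₀.1) (g p₀.2) := by
      rcases lt_or_eq_of_le (dist_nonneg : (0:ℝ) ≤ dist (g p₀.1) (g p₀.2)) with h | h
      · exact h
      · exfalso
        have heq : g p₀.1 = g p₀.2 := dist_eq_zero.mp h.symm
        have hmem1 : p₀.1 ∈ g ⁻¹' {g p₀.2} := by simp [heq]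
        have hmem2 : p₀.2 ∈ g ⁻¹' {g p₀.2} := by simp
        have hbdd : Bornology.IsBounded (g ⁻¹' {g p₀.2}) :=
          (isCompact_univ.isBounded).subset (Set.subset_univ _)
        have := dist_le_diam_of_mem hbdd hmem1 hmem2
        have h2 := hfib (g p₀.2)
        have h3 : c ≤ dist p₀.1 p₀.2 := hp₀K
        linarith
    refine ⟨dist (g p₀.1) (g p₀.2), hηpos, ?_⟩
    intro x x' hxx'
    by_contra hcon
    push_neg at hcon
    have hK' : (x, x') ∈ K := hcon
    exact absurd (lt_of_lt_of_le hxx' (hp₀min hK')) (lt_irrefl _)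
  · push_neg at hK
    exact ⟨1, one_pos, fun x x' _ => lt_of_not_ge fun hle => absurd (hK (x, x')) (not_lt.mpr hle)⟩

end BingAux

/-- **Bing Shrinking Criterion.** Let `X` and `Y` be nonempty compact metric spaces and
`f : X → Y` a continuous surjection. Then `f` is approximable by homeomorphisms if and only
if for every `ε > 0` there is a homeomorphism `h : X ≃ₜ X` such that
(1) `dist (f (h x)) (f x) < ε` for all `x ∈ X`, and
(2) `diam (h '' (f ⁻¹' {y})) < ε` for all `y ∈ Y`. -/
theorem bing_shrinking_criterion {X Y : Type} [MetricSpace X] [MetricSpace Y]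
    [CompactSpace X] [CompactSpace Y] [Nonempty X] [Nonempty Y]
    (f : X → Y) (hf : Continuous f) (hsurj : Function.Surjective f) :
    ApproximableByHomeomorphisms f ↔
      ∀ ε > (0 : ℝ), ∃ h : X ≃ₜ X,
        (∀ x : X, dist (f (h x)) (f x) < ε) ∧
        (∀ y : Y, Metric.diam (h '' (f ⁻¹' {y})) < ε) := by
  constructor
  · -- forward direction
    intro habh ε hε
    obtain ⟨g₂, hg₂⟩ := habh (ε/2) (by linarith)
    have hsu : UniformContinuous (g₂.symm : Y → X) :=
      CompactSpace.uniformContinuous_of_continuous g₂.symm.continuous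
    obtain ⟨δ'', hδ''pos, hδ''⟩ := Metric.uniformContinuous_iff.mp hsu (ε/3) (by linarith)
    set δ : ℝ := min (ε/4) (δ''/2) with hδdef
    have hδpos : 0 < δ := lt_min (by linarith) (by linarith)
    have hδ1 : δ ≤ ε/4 := min_le_left _ _
    have hδ2 : δ ≤ δ''/2 := min_le_right _ _
    obtain ⟨g₁, hg₁⟩ := habh δ hδpos
    refine ⟨g₁.trans g₂.symm, ?_, ?_⟩
    · intro x
      have hx : (g₁.trans g₂.symm) x = g₂.symm (g₁ x) := rfl
      rw [hx]
      have h1 : dist (f (g₂.symm (g₁ x))) (g₂ (g₂.symm (g₁ x))) < ε/2 := hg₂ _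
      have h2 : g₂ (g₂.symm (g₁ x)) = g₁ x := g₂.apply_symm_apply _
      have h3 : dist (f x) (g₁ x) < δ := hg₁ x
      have h4 : dist (f (g₂.symm (g₁ x))) (f x) ≤
          dist (f (g₂.symm (g₁ x))) (g₂ (g₂.symm (g₁ x))) + dist (g₂ (g₂.symm (g₁ x))) (f x) :=
        dist_triangle _ _ _
      rw [h2] at h4 h1
      rw [dist_comm (g₁ x) (f x)] at h4
      linarith
    · intro y
      have hle : Metric.diam ((g₁.trans g₂.symm) '' (f ⁻¹' {y})) ≤ ε/3 := by
        apply Metric.diam_le_of_forall_dist_le (by linarith)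
        rintro u ⟨xu, hxu, rfl⟩ v ⟨xv, hxv, rfl⟩
        simp only [Set.mem_preimage, Set.mem_singleton_iff] at hxu hxv
        have hu : dist (g₁ xu) y < δ := by rw [← hxu, dist_comm]; exact hxu ▸ hg₁ xu
        have hv : dist y (g₁ xv) < δ := by rw [← hxv]; exact hg₁ xv
        have hdist : dist (g₁ xu) (g₁ xv) < δ'' := by
          have := dist_triangle (g₁ xu) y (g₁ xv)
          linarith
        exact le_of_lt (hδ'' hdist)
      linarith
  · -- backward direction: Baire category argument
    intro hsh ε hε
    set fc : C(X, Y) := ⟨f, hf⟩ with hfcdef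
    set S : Set C(X, Y) := Set.range (fun h : X ≃ₜ X => fc.comp (h : C(X, X))) with hSdef
    set E : Set C(X, Y) := closure S with hEdef
    have hfcS : fc ∈ S := ⟨Homeomorph.refl X, by ext x; rfl⟩
    have hfcE : fc ∈ E := subset_closure hfcS
    haveI : CompleteSpace ↥E := isClosed_closure.completeSpace_coe
    -- density key lemma
    have key : ∀ c > (0:ℝ), ∀ h : X ≃ₜ X, ∀ δ > (0:ℝ), ∃ h' : X ≃ₜ X,
        fc.comp (h' : C(X, X)) ∈ BingAux.U X Y c ∧
        dist (fc.comp (h' : C(X, X))) (fc.comp (h : C(X, X))) < δ := by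
      intro c hc h δ hδ
      have hsu : UniformContinuous (h.symm : X → X) :=
        CompactSpace.uniformContinuous_of_continuous h.symm.continuous
      obtain ⟨η₀, hη₀pos, hη₀⟩ := Metric.uniformContinuous_iff.mp hsu (c/2) (by linarith)
      set ε' : ℝ := min δ η₀ with hε'def
      have hε'pos : 0 < ε' := lt_min hδ hη₀pos
      obtain ⟨k, hk1, hk2⟩ := hsh ε' hε'pos
      refine ⟨h.trans k.symm, ?_, ?_⟩
      · apply BingAux.mem_U_of_fibers
        intro y
        have hle : Metric.diam ((fc.comp (h.trans k.symm : C(X, X))) ⁻¹' {y}) ≤ c/2 := by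
          apply Metric.diam_le_of_forall_dist_le (by linarith)
          intro x hx x' hx'
          simp only [Set.mem_preimage, Set.mem_singleton_iff, ContinuousMap.comp_apply] at hx hx'
          have hmemx : h x ∈ k '' (f ⁻¹' {y}) :=
            ⟨k.symm (h x), hx, k.apply_symm_apply _⟩
          have hmemx' : h x' ∈ k '' (f ⁻¹' {y}) :=
            ⟨k.symm (h x'), hx', k.apply_symm_apply _⟩
          have hbdd : Bornology.IsBounded (k '' (f ⁻¹' {y})) :=
            (isCompact_univ.isBounded).subset (Set.subset_univ _)
          have hd : dist (h x) (h x') < η₀ := by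
            have := Metric.dist_le_diam_of_mem hbdd hmemx hmemx'
            have h2 := hk2 y
            have h3 : ε' ≤ η₀ := min_le_right _ _
            linarith
          have := hη₀ hd
          simpa using le_of_lt this
        linarith
      · rw [ContinuousMap.dist_lt_iff hδ]
        intro x
        simp only [ContinuousMap.comp_apply]
        have := hk1 (k.symm (h x))
        rw [k.apply_symm_apply] at this
        have h3 : ε' ≤ δ := min_le_left _ _
        calc dist (f ((h.trans k.symm) x)) (f (h x))
            = dist (f (h x)) (f (k.symm (h x))) := dist_comm _ _
          _ < ε' := this
          _ ≤ δ := h3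
    -- the open dense sets
    set V : ℕ → Set ↥E := fun n => Subtype.val ⁻¹' (BingAux.U X Y (1/(n+1))) with hVdef
    have hVopen : ∀ n, IsOpen (V n) := fun n =>
      (BingAux.isOpen_U _).preimage continuous_subtype_val
    have hVdense : ∀ n, Dense (V n) := by
      intro n
      rw [Metric.dense_iff]
      rintro ⟨g, hgE⟩ r hr
      obtain ⟨s, hsS, hds⟩ := Metric.mem_closure_iff.mp hgE (r/2) (by linarith)
      obtain ⟨h, rfl⟩ := hsS
      obtain ⟨h', hh'U, hh'd⟩ := key (1/(n+1)) (by positivity) h (r/2) (by linarith)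
      refine ⟨⟨fc.comp (h' : C(X, X)), subset_closure ⟨h', rfl⟩⟩, ?_, hh'U⟩
      rw [mem_ball, Subtype.dist_eq]
      calc dist (fc.comp (h' : C(X, X))) g
          ≤ dist (fc.comp (h' : C(X, X))) (fc.comp (h : C(X, X)))
            + dist (fc.comp (h : C(X, X))) g := dist_triangle _ _ _
        _ < r/2 + r/2 := by
            rw [dist_comm (fc.comp (h : C(X, X))) g]; exact add_lt_add hh'd hds
        _ = r := by ring
    have hdense : Dense (⋂ n, V n) := dense_iInter_of_isOpen hVopen hVdense
    -- extract a homeomorphism near f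
    obtain ⟨⟨g₀, hg₀E⟩, hgball, hgV⟩ :=
      (Metric.dense_iff.mp hdense) ⟨fc, hfcE⟩ ε hε
    have hgU : ∀ n : ℕ, g₀ ∈ BingAux.U X Y (1/(n+1)) := by
      intro n
      have := Set.mem_iInter.mp hgV n
      exact this
    have hginj : Function.Injective g₀ := by
      intro x x' hxx
      have hdd : ∀ n : ℕ, dist x x' < 1/(n+1) := by
        intro n
        obtain ⟨η, hη, hprop⟩ := hgU n
        exact hprop x x' (by rw [hxx]; simpa using hη)
      by_contra hne
      have hpos : 0 < dist x x' := dist_pos.mpr hne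
      obtain ⟨n, hn⟩ := exists_nat_one_div_lt hpos
      exact absurd (hdd n) (not_lt.mpr (le_of_lt hn))
    have hgsurj : Function.Surjective g₀ := by
      intro y
      have hyc : y ∈ closure (Set.range g₀) := by
        rw [Metric.mem_closure_iff]
        intro r hr
        obtain ⟨s, hsS, hds⟩ := Metric.mem_closure_iff.mp hg₀E r hr
        obtain ⟨h, rfl⟩ := hsS
        obtain ⟨x₀, hx₀⟩ := hsurj y
        refine ⟨g₀ (h.symm x₀), Set.mem_range_self _, ?_⟩
        have hsx : (fc.comp (h : C(X, X))) (h.symm x₀) = y := by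
          show f (h (h.symm x₀)) = y
          rw [h.apply_symm_apply]
          exact hx₀
        calc dist y (g₀ (h.symm x₀))
            = dist ((fc.comp (h : C(X, X))) (h.symm x₀)) (g₀ (h.symm x₀)) := by rw [hsx]
          _ ≤ dist (fc.comp (h : C(X, X))) g₀ := ContinuousMap.dist_apply_le_dist _
          _ < r := by rwa [dist_comm] at hds
      have hclosed : IsClosed (Set.range g₀) := (isCompact_range g₀.continuous).isClosed
      rwa [hclosed.closure_eq] at hyc
    let e : X ≃ Y := Equiv.ofBijective g₀ ⟨hginj, hgsurj⟩
    have hecont : Continuous (e : X → Y) := g₀.continuous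
    let G : X ≃ₜ Y := hecont.homeoOfEquivCompactToT2
    refine ⟨G, ?_⟩
    intro x
    have hd : dist g₀ fc < ε := by
      have := mem_ball.mp hgball
      rwa [Subtype.dist_eq] at this
    have : dist (g₀ x) (fc x) ≤ dist g₀ fc := ContinuousMap.dist_apply_le_dist x
    have hGx : (G : X → Y) x = g₀ x := rfl
    rw [hGx, dist_comm]
    exact lt_of_le_of_lt this hd
end

section
/- For every n ≥ 1 and every homeomorphism φ of the unit sphere S^{n-1} onto itself, the adjunction space obtained by gluing two copies of the closed unit ball D^n along their boundary spheres via φ (i.e., the quotient of the disjoint union D^n ⊔ D^n identifying x in the boundary of the first copy with φ(x) in the boundary of the second) is homeomorphic to the n-sphere S^n. -/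
noncomputable section
open Metric Real

namespace GlueAux

variable {n : ℕ}

abbrev E (n : ℕ) := EuclideanSpace ℝ (Fin n)
abbrev D (n : ℕ) := Metric.closedBall (0 : E n) 1
abbrev S (n : ℕ) := Metric.sphere (0 : E n) 1

/-- last coordinate helper -/
def sq1 (x : E n) : ℝ := Real.sqrt (1 - ‖x‖^2)

/-- embed `E n` into `E (n+1)` with last coordinate `σ * sq1 x`. -/
def emb (σ : ℝ) (x : E n) : E (n+1) :=
  (WithLp.equiv 2 (Fin (n+1) → ℝ)).symm
    (Fin.snoc (WithLp.equiv 2 (Fin n → ℝ) x) (σ * sq1 x))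

lemma emb_coord (σ : ℝ) (x : E n) :
    WithLp.equiv 2 (Fin (n+1) → ℝ) (emb σ x)
      = Fin.snoc (WithLp.equiv 2 (Fin n → ℝ) x) (σ * sq1 x) := by
  simp [emb]

lemma norm_sq_eq (x : E n) : ‖x‖^2 = ∑ i, (WithLp.equiv 2 (Fin n → ℝ) x i)^2 := by
  rw [EuclideanSpace.norm_eq, Real.sq_sqrt (by positivity)]
  simp [Real.norm_eq_abs, sq_abs]

lemma norm_emb {σ : ℝ} (hσ : σ = 1 ∨ σ = -1) {x : E n} (hx : ‖x‖ ≤ 1) :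
    ‖emb σ x‖ = 1 := by
  have h1 : (0:ℝ) ≤ 1 - ‖x‖^2 := by nlinarith [norm_nonneg x]
  have : ‖emb σ x‖^2 = 1 := by
    rw [norm_sq_eq, emb_coord, Fin.sum_univ_castSucc]
    simp only [Fin.snoc_castSucc, Fin.snoc_last]
    have : (σ * sq1 x)^2 = 1 - ‖x‖^2 := by
      rcases hσ with h | h <;>
        simp [h, sq1, mul_pow, Real.sq_sqrt h1]
    rw [this, ← norm_sq_eq]; ring
  nlinarith [norm_nonneg (emb σ x)]

lemma emb_mem_sphere {σ : ℝ} (hσ : σ = 1 ∨ σ = -1) {x : E n} (hx : ‖x‖ ≤ 1) :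
    emb σ x ∈ S (n+1) := by
  simpa [mem_sphere_iff_norm] using norm_emb hσ hx

lemma emb_init (σ : ℝ) (x : E n) :
    Fin.init (WithLp.equiv 2 (Fin (n+1) → ℝ) (emb σ x)) = WithLp.equiv 2 (Fin n → ℝ) x := by
  rw [emb_coord]; exact Fin.init_snoc _ _

lemma emb_last (σ : ℝ) (x : E n) :
    WithLp.equiv 2 (Fin (n+1) → ℝ) (emb σ x) (Fin.last n) = σ * sq1 x := by
  rw [emb_coord]; exact Fin.snoc_last _ _

lemma emb_injective (σ : ℝ) : Function.Injective (emb (n := n) σ) := by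
  intro x y h
  have := congrArg (fun z => Fin.init (WithLp.equiv 2 (Fin (n+1) → ℝ) z)) h
  simp only [emb_init] at this
  exact (WithLp.equiv 2 (Fin n → ℝ)).injective this

lemma continuous_emb (σ : ℝ) : Continuous (emb (n := n) σ) := by
  apply (PiLp.continuous_toLp 2 (fun _ : Fin (n+1) => ℝ)).comp
  apply continuous_pi
  intro i
  refine Fin.lastCases ?_ ?_ i
  · simp only [Fin.snoc_last]
    exact continuous_const.mul ((continuous_const.sub
      ((continuous_norm).pow 2)).sqrt)
  · intro j
    simp only [Fin.snoc_castSucc]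
    exact (continuous_apply j).comp (PiLp.continuous_ofLp 2 (fun _ : Fin n => ℝ))

lemma sq1_eq_zero {x : E n} (hx : ‖x‖ ≤ 1) (h : sq1 x = 0) : ‖x‖ = 1 := by
  have := Real.sqrt_eq_zero'.mp h
  nlinarith [norm_nonneg x]

lemma sq1_of_norm_one {x : E n} (hx : ‖x‖ = 1) : sq1 x = 0 := by
  simp [sq1, hx]

variable (ψ : S n ≃ₜ S n)

/-- unit vector of a nonzero vector, as sphere element -/
def unitS (y : E n) (hy : y ≠ 0) : S n :=
  ⟨‖y‖⁻¹ • y, by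
    simp only [mem_sphere_iff_norm, sub_zero, norm_smul, norm_inv, norm_norm]
    exact inv_mul_cancel₀ (norm_ne_zero_iff.mpr hy)⟩

open Classical in
/-- the cone of ψ on the ambient space -/
def coneFun (y : E n) : E n :=
  if hy : y = 0 then 0 else ‖y‖ • ((ψ (unitS y hy) : S n) : E n)

lemma coneFun_of_ne {y : E n} (hy : y ≠ 0) :
    coneFun ψ y = ‖y‖ • ((ψ (unitS y hy) : S n) : E n) := by
  simp [coneFun, hy]

lemma coneFun_zero : coneFun ψ 0 = 0 := by simp [coneFun]

lemma norm_coneFun (y : E n) : ‖coneFun ψ y‖ = ‖y‖ := by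
  unfold coneFun
  split
  · simp [*]
  · rename_i hy
    rw [norm_smul, norm_norm]
    have : ‖((ψ (unitS y hy) : S n) : E n)‖ = 1 := by
      have := (ψ (unitS y hy)).2
      simpa [mem_sphere_iff_norm] using this
    rw [this, mul_one]

lemma coneFun_of_norm_one {y : E n} (hy : ‖y‖ = 1) :
    coneFun ψ y = ((ψ ⟨y, by simp [mem_sphere_iff_norm, hy]⟩ : S n) : E n) := by
  have hy0 : y ≠ 0 := by intro h; rw [h] at hy; simp at hy
  have hu : unitS y hy0 = ⟨y, by simp [mem_sphere_iff_norm, hy]⟩ :=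
    Subtype.ext (by simp [unitS, hy])
  simp only [coneFun_of_ne ψ hy0, hu, hy, one_smul]

lemma smul_unitS {y : E n} (hy : y ≠ 0) : ‖y‖ • ((unitS y hy : S n) : E n) = y := by
  simp only [unitS, smul_smul]
  rw [mul_inv_cancel₀ (norm_ne_zero_iff.mpr hy), one_smul]

lemma coneFun_coneFun (x : E n) : coneFun ψ (coneFun ψ.symm x) = x := by
  by_cases hx : x = 0
  · simp [hx, coneFun]
  · have hcx : coneFun ψ.symm x = ‖x‖ • ((ψ.symm (unitS x hx) : S n) : E n) := by
      simp [coneFun, hx]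
    have hn0 : coneFun ψ.symm x ≠ 0 := by
      rw [← norm_ne_zero_iff, norm_coneFun]
      exact norm_ne_zero_iff.mpr hx
    have hnorm : ‖coneFun ψ.symm x‖ = ‖x‖ := norm_coneFun _ _
    have hunit : unitS (coneFun ψ.symm x) hn0 = ψ.symm (unitS x hx) := by
      apply Subtype.ext
      simp only [unitS]
      rw [hnorm]
      conv_lhs => rw [hcx]
      rw [smul_smul, inv_mul_cancel₀ (norm_ne_zero_iff.mpr hx), one_smul]
      rfl
    rw [coneFun_of_ne ψ hn0, hnorm, hunit]
    simp only [Homeomorph.apply_symm_apply]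
    exact smul_unitS hx

lemma coneFun_injective : Function.Injective (coneFun ψ) := by
  intro a b h
  have h2 := coneFun_coneFun ψ.symm a
  have h3 := coneFun_coneFun ψ.symm b
  rw [Homeomorph.symm_symm] at h2 h3
  rw [← h2, ← h3, h]

lemma continuous_coneFun : Continuous (coneFun ψ) := by
  rw [continuous_iff_continuousAt]
  intro y
  by_cases hy : y = 0
  · subst hy
    have key : ∀ z : E n, ‖coneFun ψ z‖ ≤ ‖z‖ := fun z => le_of_eq (norm_coneFun ψ z)
    rw [ContinuousAt, coneFun_zero]
    exact squeeze_zero_norm key (continuous_norm.tendsto' 0 0 (by simp))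
  · have hopen : IsOpen {z : E n | z ≠ 0} := isOpen_ne
    have hF : Continuous (fun z : {z : E n // z ≠ 0} =>
        ‖z.1‖ • ((ψ (unitS z.1 z.2) : S n) : E n)) := by
      have hu : Continuous (fun z : {z : E n // z ≠ 0} => unitS z.1 z.2) := by
        apply Continuous.subtype_mk
        have h1 : Continuous (fun z : {z : E n // z ≠ 0} => ‖z.val‖⁻¹) := by
          apply Continuous.inv₀ continuous_subtype_val.norm
          exact fun z => norm_ne_zero_iff.mpr z.2
        exact h1.smul continuous_subtype_val
      exact continuous_subtype_val.norm.smul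
        (continuous_subtype_val.comp (ψ.continuous.comp hu))
    have hcon : ContinuousOn (coneFun ψ) {z : E n | z ≠ 0} := by
      rw [continuousOn_iff_continuous_restrict]
      refine hF.congr ?_
      intro z
      exact (coneFun_of_ne ψ z.2).symm
    exact hcon.continuousAt (hopen.mem_nhds hy)

lemma coneFun_sphere (u : S n) : coneFun ψ ((u : S n) : E n) = ((ψ u : S n) : E n) := by
  rw [coneFun_of_norm_one ψ (mem_sphere_zero_iff_norm.mp u.2)]

lemma emb_boundary {x : E n} (hx : ‖x‖ = 1) (σ τ : ℝ) : emb σ x = emb τ x := by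
  simp [emb, sq1_of_norm_one hx]

variable (φ : S n ≃ₜ S n)

def gL (x : D n) : ↥(S (n+1)) :=
  ⟨emb (-1) x.1, emb_mem_sphere (Or.inr rfl) (mem_closedBall_zero_iff.mp x.2)⟩

def gR (y : D n) : ↥(S (n+1)) :=
  ⟨emb 1 (coneFun φ.symm y.1), emb_mem_sphere (Or.inl rfl)
    (by rw [norm_coneFun]; exact mem_closedBall_zero_iff.mp y.2)⟩

def g : (↥(D n) ⊕ ↥(D n)) → ↥(S (n+1)) := Sum.elim gL (gR φ)

lemma continuous_g : Continuous (g φ) := by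
  apply Continuous.sumElim
  · exact (((continuous_emb (-1)).comp continuous_subtype_val).subtype_mk _)
  · exact (((continuous_emb 1).comp
      ((continuous_coneFun φ.symm).comp continuous_subtype_val)).subtype_mk _)

lemma g_surjective : Function.Surjective (g φ) := by
  intro z
  set f := WithLp.equiv 2 (Fin (n+1) → ℝ) z.1 with hf
  set t := f (Fin.last n) with ht
  set x : E n := (WithLp.equiv 2 (Fin n → ℝ)).symm (Fin.init f) with hx
  have hzx : WithLp.equiv 2 (Fin n → ℝ) x = Fin.init f := Equiv.apply_symm_apply _ _
  have hnormz : ‖(z : E (n+1))‖ = 1 := mem_sphere_zero_iff_norm.mp z.2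
  have hsum : ‖x‖^2 + t^2 = 1 := by
    have h1 := norm_sq_eq (n := n+1) z.1
    rw [Fin.sum_univ_castSucc, hnormz, one_pow] at h1
    have h2 := norm_sq_eq x
    rw [hzx] at h2
    simp only [Fin.init] at h2
    rw [h2]
    linarith [h1]
  have hx1 : ‖x‖ ≤ 1 := by nlinarith [norm_nonneg x, sq_nonneg t]
  have hsq1 : sq1 x = |t| := by
    rw [sq1, show 1 - ‖x‖^2 = t^2 by linarith, Real.sqrt_sq_eq_abs]
  have key : ∀ σ : ℝ, σ * |t| = t → emb σ x = z.1 := by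
    intro σ hσ
    apply (WithLp.equiv 2 (Fin (n+1) → ℝ)).injective
    rw [emb_coord, hzx, hsq1, hσ]
    exact Fin.snoc_init_self f
  rcases le_or_gt t 0 with htle | htpos
  · refine ⟨Sum.inl ⟨x, mem_closedBall_zero_iff.mpr hx1⟩, Subtype.ext ?_⟩
    show emb (-1) x = z.1
    apply key
    rw [abs_of_nonpos htle]; ring
  · have hcc := coneFun_coneFun φ.symm x
    rw [Homeomorph.symm_symm] at hcc
    refine ⟨Sum.inr ⟨coneFun φ x, mem_closedBall_zero_iff.mpr
      (by rw [norm_coneFun]; exact hx1)⟩, Subtype.ext ?_⟩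
    show emb 1 (coneFun φ.symm (coneFun φ x)) = z.1
    rw [hcc]
    apply key
    rw [abs_of_nonneg htpos.le]; ring

end GlueAux

/-- The relation on `Dⁿ ⊔ Dⁿ` generating the gluing of two closed unit balls along their
boundary spheres via a homeomorphism `φ` of the sphere: a boundary point `x` of the first
copy is identified with `φ x` in the boundary of the second copy. -/
def glueRel (n : ℕ)
    (φ : Metric.sphere (0 : EuclideanSpace ℝ (Fin n)) 1 ≃ₜ
      Metric.sphere (0 : EuclideanSpace ℝ (Fin n)) 1) :
    (Metric.closedBall (0 : EuclideanSpace ℝ (Fin n)) 1 ⊕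
      Metric.closedBall (0 : EuclideanSpace ℝ (Fin n)) 1) →
    (Metric.closedBall (0 : EuclideanSpace ℝ (Fin n)) 1 ⊕
      Metric.closedBall (0 : EuclideanSpace ℝ (Fin n)) 1) → Prop :=
  fun a b => ∃ x : Metric.sphere (0 : EuclideanSpace ℝ (Fin n)) 1,
    a = Sum.inl ⟨x.1, Metric.sphere_subset_closedBall x.2⟩ ∧
    b = Sum.inr ⟨(φ x : Metric.sphere (0 : EuclideanSpace ℝ (Fin n)) 1).1,
      Metric.sphere_subset_closedBall (φ x).2⟩

namespace GlueAux

variable {n : ℕ} (φ : S n ≃ₜ S n)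

lemma g_respects : ∀ a b, glueRel n φ a b → g φ a = g φ b := by
  rintro a b ⟨x, rfl, rfl⟩
  show gL _ = gR φ _
  have h1 : ‖(x : E n)‖ = 1 := mem_sphere_zero_iff_norm.mp x.2
  apply Subtype.ext
  show emb (-1) x.1 = emb 1 (coneFun φ.symm ((φ x : S n) : E n))
  rw [coneFun_sphere φ.symm (φ x), Homeomorph.symm_apply_apply]
  exact emb_boundary h1 _ _

lemma g_mixed {x y : ↥(D n)} (h : gL x = gR φ y) :
    glueRel n φ (Sum.inl x) (Sum.inr y) := by
  have hval : emb (-1) (x : E n) = emb 1 (coneFun φ.symm (y : E n)) :=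
    congrArg Subtype.val h
  have hlast := congrArg
    (fun z : E (n+1) => WithLp.equiv 2 (Fin (n+1) → ℝ) z (Fin.last n)) hval
  simp only [emb_last] at hlast
  have hs1 : (0:ℝ) ≤ sq1 (x : E n) := Real.sqrt_nonneg _
  have hs2 : (0:ℝ) ≤ sq1 (coneFun φ.symm (y : E n)) := Real.sqrt_nonneg _
  have h01 : sq1 (x : E n) = 0 := by nlinarith
  have h02 : sq1 (coneFun φ.symm (y : E n)) = 0 := by nlinarith
  have hx1 : ‖(x : E n)‖ = 1 := sq1_eq_zero (mem_closedBall_zero_iff.mp x.2) h01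
  have hcy : ‖coneFun φ.symm (y : E n)‖ = 1 := sq1_eq_zero
    (by rw [norm_coneFun]; exact mem_closedBall_zero_iff.mp y.2) h02
  have hy1 : ‖(y : E n)‖ = 1 := by rwa [norm_coneFun] at hcy
  have hinit := congrArg
    (fun z : E (n+1) => Fin.init (WithLp.equiv 2 (Fin (n+1) → ℝ) z)) hval
  simp only [emb_init] at hinit
  have hxy : (x : E n) = coneFun φ.symm (y : E n) :=
    (WithLp.equiv 2 (Fin n → ℝ)).injective hinit
  set ys : S n := ⟨(y : E n), mem_sphere_zero_iff_norm.mpr hy1⟩ with hys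
  have hcs : coneFun φ.symm (y : E n) = ((φ.symm ys : S n) : E n) :=
    coneFun_sphere φ.symm ys
  have hxs : (⟨(x : E n), mem_sphere_zero_iff_norm.mpr hx1⟩ : S n) = φ.symm ys :=
    Subtype.ext (by rw [hxy, hcs])
  refine ⟨⟨(x : E n), mem_sphere_zero_iff_norm.mpr hx1⟩, ?_, ?_⟩
  · exact congrArg Sum.inl (Subtype.ext rfl)
  · apply congrArg Sum.inr
    apply Subtype.ext
    show (y : E n) = ((φ ⟨(x : E n), _⟩ : S n) : E n)
    rw [hxs, Homeomorph.apply_symm_apply]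

end GlueAux

open GlueAux in
/-- For every `n ≥ 1` and every homeomorphism `φ` of the unit sphere `S^{n-1}` onto itself,
the adjunction space obtained by gluing two copies of the closed unit ball `Dⁿ` along their
boundary spheres via `φ` (with the quotient topology on the disjoint union) is homeomorphic
to the `n`-sphere `Sⁿ ⊆ ℝ^{n+1}`. -/
theorem glue_two_balls_homeomorphic_sphere (n : ℕ) (hn : 1 ≤ n)
    (φ : Metric.sphere (0 : EuclideanSpace ℝ (Fin n)) 1 ≃ₜ
      Metric.sphere (0 : EuclideanSpace ℝ (Fin n)) 1) :
    Nonempty (Quot (glueRel n φ) ≃ₜ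
      Metric.sphere (0 : EuclideanSpace ℝ (Fin (n + 1))) 1) := by
  classical
  let G : Quot (glueRel n φ) → ↥(S (n+1)) := Quot.lift (g φ) (g_respects φ)
  have hGsurj : Function.Surjective G := by
    intro z
    obtain ⟨a, ha⟩ := g_surjective φ z
    exact ⟨Quot.mk _ a, ha⟩
  have hGinj : Function.Injective G := by
    intro qa qb
    induction qa using Quot.ind with | _ a =>
    induction qb using Quot.ind with | _ b =>
    intro h
    replace h : g φ a = g φ b := h
    cases a with
    | inl x =>
      cases b with
      | inl x' =>
        have hv : emb (-1) (x : E n) = emb (-1) ((x' : ↥(D n)) : E n) :=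
          congrArg Subtype.val h
        have : x = x' := Subtype.ext (emb_injective (-1) hv)
        rw [this]
      | inr y => exact Quot.sound (g_mixed φ h)
    | inr y =>
      cases b with
      | inl x => exact (Quot.sound (g_mixed φ h.symm)).symm
      | inr y' =>
        have hv : emb 1 (coneFun φ.symm (y : E n))
            = emb 1 (coneFun φ.symm ((y' : ↥(D n)) : E n)) :=
          congrArg Subtype.val h
        have : y = y' := Subtype.ext (coneFun_injective φ.symm (emb_injective 1 hv))
        rw [this]
  haveI : CompactSpace ↥(D n) :=
    isCompact_iff_compactSpace.mp (isCompact_closedBall 0 1)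
  haveI : CompactSpace (Quot (glueRel n φ)) := by
    constructor
    have hr : Set.range (Quot.mk (glueRel n φ)) = Set.univ :=
      Set.range_eq_univ.mpr (fun q => Quot.exists_rep q)
    rw [← hr]
    exact isCompact_range continuous_quot_mk
  have hc : Continuous G := continuous_quot_lift (g_respects φ) (continuous_g φ)
  exact ⟨Continuous.homeoOfEquivCompactToT2
    (f := Equiv.ofBijective G ⟨hGinj, hGsurj⟩) hc⟩
end
end
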